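/- Define the integer sequence a by a_0 = 1, a_1 = −1, a_{2m} = C_{m−1} for m ≥ 1, and a_{2m+1} = 0 for m ≥ 1 (the expansion of 1 − x + x²·c(x²)). Then the Hankel transform satisfies det((a_{i+j})_{0≤i,j≤0}) = 1 and det((a_{i+j})_{0≤i,j≤n}) = 1 − n for all n ≥ 1; i.e., the Hankel transform is 1, 0, −1, −2, −3, −4, … with generating function (1−2x)/(1−x)². -/

import Mathlib

attribute [-simp] Fin.val_eq_zero_iff

def bal : ℕ → ℕ → ℕ
  | 0, 0 => 1
  | 0, _+1 => 0
  | n+1, 0 => bal n 1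
  | n+1, k+1 => bal n k + bal n (k+2)

lemma bal_gt : ∀ n k, n < k → bal n k = 0
  | 0, 0 => by omega
  | 0, k+1 => fun _ => rfl
  | n+1, 0 => by omega
  | n+1, k+1 => fun h => by
      simp [bal, bal_gt n k (by omega), bal_gt n (k+2) (by omega)]

lemma bal_odd : ∀ n k, (n + k) % 2 = 1 → bal n k = 0
  | 0, 0 => by omega
  | 0, k+1 => fun _ => rfl
  | n+1, 0 => fun h => by
      show bal n 1 = 0; exact bal_odd n 1 (by omega)
  | n+1, k+1 => fun h => by
      show bal n k + bal n (k+2) = 0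
      rw [bal_odd n k (by omega), bal_odd n (k+2) (by omega)]

lemma bal_self : ∀ n, bal n n = 1
  | 0 => rfl
  | n+1 => by
      show bal n n + bal n (n+2) = 1
      rw [bal_self n, bal_gt n (n+2) (by omega)]

lemma bal_formula : ∀ n t k, n = 2*t + k →
    (bal n k : ℤ) = n.choose t - n.choose (t + k + 1)
  | 0, t, k => fun h => by
      obtain ⟨rfl, rfl⟩ : t = 0 ∧ k = 0 := by omega
      simp [bal]
  | n+1, t, 0 => fun h => by
      obtain ⟨t', rfl⟩ : ∃ t', t = t' + 1 := ⟨t - 1, by omega⟩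
      show ((bal n 1 : ℕ) : ℤ) = _
      rw [bal_formula n t' 1 (by omega)]
      have p1 : (n+1).choose (t'+1) = n.choose t' + n.choose (t'+1) := Nat.choose_succ_succ _ _
      have e : t' + 1 + 0 + 1 = (t' + 1) + 1 := by omega
      rw [e]
      have p2 : (n+1).choose (t'+1+1) = n.choose (t'+1) + n.choose (t'+1+1) :=
        Nat.choose_succ_succ _ _
      have e2 : t' + 1 + 1 = t' + 2 := rfl
      rw [p1, p2]
      have e3 : t' + 1 + 1 = t' + 1 + 1 := rfl
      push_cast
      have : (n.choose (t'+1+1) : ℤ) = n.choose (t'+2) := by norm_num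
      rw [this]
      ring
  | n+1, t, k+1 => fun h => by
      have hn : n = 2*t + k := by omega
      show ((bal n k + bal n (k+2) : ℕ) : ℤ) = _
      push_cast
      rw [bal_formula n t k hn]
      by_cases ht : t = 0
      · subst ht
        have hkn : k = n := by omega
        subst hkn
        rw [bal_gt k (k+2) (by omega)]
        have z1 : (k+1).choose (0 + (k+1) + 1) = 0 := Nat.choose_eq_zero_of_lt (by omega)
        rw [z1]
        have z2 : k.choose (0 + k + 1) = 0 := Nat.choose_eq_zero_of_lt (by omega)
        rw [z2]
        simp [bal_self k]
      · obtain ⟨s, rfl⟩ : ∃ s, t = s + 1 := ⟨t - 1, by omega⟩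
        rw [bal_formula n s (k+2) (by omega)]
        have p1 : (n+1).choose (s+1) = n.choose s + n.choose (s+1) := Nat.choose_succ_succ _ _
        have e : s + 1 + (k + 1) + 1 = (s + 1 + k + 1) + 1 := by omega
        rw [e]
        have p2 : (n+1).choose ((s+1+k+1)+1) = n.choose (s+1+k+1) + n.choose (s+1+k+2) :=
          Nat.choose_succ_succ _ _
        rw [p1]
        have p2' : (n+1).choose (s+1+k+1+1) = n.choose (s+1+k+1) + n.choose (s+1+k+1+1) :=
          Nat.choose_succ_succ _ _
        rw [show s+1+k+1+1 = s+1+k+2 from rfl] at p2'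
        rw [show s+1+k+2 = s+1+k+1+1 from rfl]
        rw [show s+1+k+1+1 = s+1+k+2 from rfl, p2']
        push_cast
        rw [show s + (k+2) + 1 = s+1+k+2 from by omega]
        ring

lemma bal_two_mul (m : ℕ) : (bal (2*m) 0 : ℤ) = catalan m := by
  have h := bal_formula (2*m) m 0 (by omega)
  have e : m + 0 + 1 = m + 1 := rfl
  rw [e] at h
  have c1 : (m + 1) * catalan m = (2*m).choose m := succ_mul_catalan_eq_centralBinom m
  have c3 : (2*m).choose (m+1) * (m+1) = (2*m).choose m * (2*m - m) := Nat.choose_succ_right_eq _ _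
  rw [show 2*m - m = m from by omega] at c3
  have key : ((m:ℤ)+1) * (bal (2*m) 0 : ℤ) = ((m:ℤ)+1) * catalan m := by
    rw [h]
    have h3 : ((2*m).choose (m+1) : ℤ) * ((m:ℤ)+1) = ((2*m).choose m : ℤ) * m := by exact_mod_cast congrArg (fun x : ℕ => (x:ℤ)) c3
    have h1 : ((m:ℤ)+1) * (catalan m : ℤ) = ((2*m).choose m : ℤ) := by exact_mod_cast congrArg (fun x : ℕ => (x:ℤ)) c1
    linarith
  have := mul_left_cancel₀ (a := ((m:ℤ)+1)) (by positivity) key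
  exact this

def useq (k : ℕ) : ℤ := if k % 4 = 1 ∨ k % 4 = 2 then 1 else -1

lemma useq_add_two (k : ℕ) : useq (k+2) = - useq k := by
  unfold useq
  rcases (show k % 4 = 0 ∨ k % 4 = 1 ∨ k % 4 = 2 ∨ k % 4 = 3 by omega) with h|h|h|h <;>
    rw [show (k+2) % 4 = (k % 4 + 2) % 4 by omega, h] <;> norm_num

lemma useq_sq (k : ℕ) : useq k * useq k = 1 := by
  unfold useq; split <;> norm_num

lemma useq_one : useq 1 = 1 := rfl
lemma useq_zero : useq 0 = -1 := rfl

lemma bal_step (i : ℕ) (f : ℕ → ℤ) :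
    ∑ k ∈ Finset.range (i+2), (bal (i+1) k : ℤ) * f k
      = ∑ k ∈ Finset.range i, (bal i (k+1) : ℤ) * (f k + f (k+2)) + (bal i 0 : ℤ) * f 1 := by
  rw [Finset.sum_range_succ']
  have hsplit : ∀ k, ((bal (i+1) (k+1) : ℕ) : ℤ) * f (k+1)
      = (bal i k : ℤ) * f (k+1) + (bal i (k+2) : ℤ) * f (k+1) := by
    intro k
    show ((bal i k + bal i (k+2) : ℕ) : ℤ) * f (k+1) = _
    push_cast; ring
  rw [Finset.sum_congr rfl fun k _ => hsplit k, Finset.sum_add_distrib]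
  have hb0 : (bal (i+1) 0 : ℤ) = (bal i 1 : ℤ) := rfl
  rw [hb0]
  -- T1 : peel bottom
  have hT1 : ∑ k ∈ Finset.range (i+1), (bal i k : ℤ) * f (k+1)
      = ∑ k ∈ Finset.range i, (bal i (k+1) : ℤ) * f (k+2) + (bal i 0 : ℤ) * f 1 := by
    rw [Finset.sum_range_succ']
  -- T2 : peel top (zero)
  have hT2 : ∑ k ∈ Finset.range (i+1), (bal i (k+2) : ℤ) * f (k+1)
      = ∑ k ∈ Finset.range i, (bal i (k+2) : ℤ) * f (k+1) := by
    rw [Finset.sum_range_succ, bal_gt i (i+2) (by omega)]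
    simp
  -- combine T2 + bal i 1 * f 0 = ∑_{range (i+1)} bal i (k+1) * f k
  have hT2' : ∑ k ∈ Finset.range i, (bal i (k+2) : ℤ) * f (k+1) + (bal i 1 : ℤ) * f 0
      = ∑ k ∈ Finset.range (i+1), (bal i (k+1) : ℤ) * f k := by
    rw [Finset.sum_range_succ']
  have hT2'' : ∑ k ∈ Finset.range (i+1), (bal i (k+1) : ℤ) * f k
      = ∑ k ∈ Finset.range i, (bal i (k+1) : ℤ) * f k := by
    rw [Finset.sum_range_succ, bal_gt i (i+1) (by omega)]
    simp
  rw [hT1, hT2]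
  have : ∑ k ∈ Finset.range i, (bal i (k+2) : ℤ) * f (k+1) + (bal i 1 : ℤ) * f 0
      = ∑ k ∈ Finset.range i, (bal i (k+1) : ℤ) * f k := by rw [hT2', hT2'']
  have goal' : ∑ k ∈ Finset.range i, (bal i (k+1) : ℤ) * f (k+2)
      + ∑ k ∈ Finset.range i, (bal i (k+1) : ℤ) * f k
      = ∑ k ∈ Finset.range i, (bal i (k+1) : ℤ) * (f k + f (k+2)) := by
    rw [← Finset.sum_add_distrib]
    exact Finset.sum_congr rfl fun k _ => by ring
  linarith [this, goal']

def gseq : ℕ → ℤ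
  | 0 => -1
  | s+1 => (bal s 0 : ℤ)

lemma G_spec : ∀ s, ∑ k ∈ Finset.range (s+1), (bal s k : ℤ) * useq k = gseq s
  | 0 => by simp [bal, gseq, useq_zero]
  | s+1 => by
      rw [show s+1+1 = s+2 from rfl, bal_step s useq]
      have : ∀ k, useq k + useq (k+2) = 0 := fun k => by rw [useq_add_two]; ring
      simp [this, useq_one, gseq]

lemma F_spec : ∀ i j, ∑ k ∈ Finset.range (i+1), (bal i k : ℤ) * (bal j k : ℤ) = (bal (i+j) 0 : ℤ)
  | 0, j => by simp [bal]
  | i+1, j => by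
      rw [show i+1+1 = i+2 from rfl, bal_step i (fun k => (bal j k : ℤ))]
      have key : ∑ k ∈ Finset.range (i+1), (bal i k : ℤ) * (bal (j+1) k : ℤ)
          = (bal (i+(j+1)) 0 : ℤ) := F_spec i (j+1)
      rw [Finset.sum_range_succ'] at key
      have h1 : ∀ k, ((bal (j+1) (k+1) : ℕ) : ℤ) = (bal j k : ℤ) + (bal j (k+2) : ℤ) := by
        intro k; show ((bal j k + bal j (k+2) : ℕ) : ℤ) = _; push_cast; ring
      have h2 : ((bal (j+1) 0 : ℕ) : ℤ) = (bal j 1 : ℤ) := rfl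
      simp only [h1, h2] at key
      have e : i + (j+1) = i + 1 + j := by omega
      rw [e] at key
      rw [← key]

section Matrices
variable (n : ℕ)

def Qm : Matrix (Fin (n+1)) (Fin (n+1)) ℤ := Matrix.of fun i j =>
  if j.1 = 0 then (if i.1 = 0 then 1 else 0)
  else if i.1 = 0 then 0 else (bal (i.1-1) (j.1-1) : ℤ)

def Mm : Matrix (Fin (n+1)) (Fin (n+1)) ℤ := Matrix.of fun i j =>
  if i.1 = 0 then (if j.1 = 0 then 1 else useq (j.1-1))
  else if j.1 = 0 then useq (i.1-1) else (if i = j then 1 else 0)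

def Em : Matrix (Fin (n+1)) (Fin (n+1)) ℤ := Matrix.of fun i j =>
  if i.1 = 0 then (if j.1 = 0 then 1 else - useq (j.1-1)) else (if i = j then 1 else 0)

def Pm : Matrix (Fin (n+1)) (Fin (n+1)) ℤ := Matrix.of fun i l =>
  if i.1 = 0 then (if l.1 = 0 then 1 else useq (l.1-1))
  else if l.1 = 0 then gseq (i.1-1) else (bal (i.1-1) (l.1-1) : ℤ)

-- helper: pad range sums
lemma pad_sum (i N : ℕ) (h : i < N) (f : ℕ → ℤ) :
    ∑ k ∈ Finset.range N, (bal i k : ℤ) * f k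
      = ∑ k ∈ Finset.range (i+1), (bal i k : ℤ) * f k := by
  refine (Finset.sum_subset (by simp [Finset.range_subset]; omega) ?_).symm
  intro x hx hnx
  simp only [Finset.mem_range] at hx hnx
  rw [bal_gt i x (by omega)]
  simp

lemma QM_eq : Qm n * Mm n = Pm n := by
  ext i l
  rw [Matrix.mul_apply]
  by_cases hi : i.1 = 0
  · rw [Fin.sum_univ_succ]
    have : ∀ x : Fin n, Qm n i x.succ * Mm n x.succ l = 0 := by
      intro x
      simp [Qm, hi, Fin.val_succ]
    simp only [this, Finset.sum_const_zero, add_zero]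
    simp [Qm, Mm, Pm, hi]
  · rw [Fin.sum_univ_succ]
    have h0 : Qm n i 0 * Mm n 0 l = 0 := by simp [Qm, hi]
    rw [h0, zero_add]
    have hterm : ∀ x : Fin n, Qm n i x.succ * Mm n x.succ l
        = (bal (i.1-1) x.1 : ℤ) * Mm n x.succ l := by
      intro x; simp [Qm, hi, Fin.val_succ]
    rw [Finset.sum_congr rfl fun x _ => hterm x]
    by_cases hl : l.1 = 0
    · have hm : ∀ x : Fin n, Mm n x.succ l = useq x.1 := by
        intro x; simp [Mm, hl, Fin.val_succ]
      rw [Finset.sum_congr rfl fun x _ => by rw [hm x]]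
      rw [Fin.sum_univ_eq_sum_range (fun k => (bal (i.1-1) k : ℤ) * useq k) n]
      rw [pad_sum (i.1-1) n (by omega) useq, G_spec]
      simp [Pm, hi, hl]
    · obtain ⟨l', rfl⟩ : ∃ l' : Fin n, l = l'.succ :=
        ⟨⟨l.1 - 1, by omega⟩, by ext; simp [Fin.val_succ]; omega⟩
      have hm : ∀ x : Fin n, Mm n x.succ l'.succ = if x = l' then 1 else 0 := by
        intro x
        simp [Mm, Fin.val_succ, Fin.succ_inj]
      rw [Finset.sum_congr rfl fun x _ => by rw [hm x]]
      simp only [mul_ite, mul_one, mul_zero]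
      rw [Finset.sum_ite_eq' Finset.univ l' (fun x => (bal (i.1-1) x.1 : ℤ))]
      simp [Pm, hi, Fin.val_succ]

end Matrices

section Main
open Matrix
variable (n : ℕ)

lemma PQt_eq (a : ℕ → ℤ) (ha1 : ∀ s, a (s+1) = gseq s) (h0 : a 0 = 1) :
    Pm n * (Qm n)ᵀ = Matrix.of fun i j : Fin (n+1) => a (i.1 + j.1) := by
  ext i j
  rw [Matrix.mul_apply]
  simp only [Matrix.transpose_apply]
  by_cases hj : j.1 = 0
  · rw [Fin.sum_univ_succ]
    have : ∀ x : Fin n, Pm n i x.succ * Qm n j x.succ = 0 := by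
      intro x; simp [Qm, hj, Fin.val_succ]
    simp only [this, Finset.sum_const_zero, add_zero]
    have hq : Qm n j 0 = 1 := by simp [Qm, hj]
    rw [hq, mul_one]
    by_cases hi : i.1 = 0
    · have hp : Pm n i 0 = 1 := by simp [Pm, hi]
      rw [hp, Matrix.of_apply, show i.1 + j.1 = 0 by omega, h0]
    · have hp : Pm n i 0 = gseq (i.1-1) := by simp [Pm, hi]
      rw [hp, Matrix.of_apply, show i.1 + j.1 = (i.1 - 1) + 1 by omega, ha1]
  · rw [Fin.sum_univ_succ]
    have h0' : Pm n i 0 * Qm n j 0 = 0 := by simp [Qm, hj]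
    rw [h0', zero_add]
    have hq : ∀ x : Fin n, Qm n j x.succ = (bal (j.1-1) x.1 : ℤ) := by
      intro x; simp [Qm, hj, Fin.val_succ]
    by_cases hi : i.1 = 0
    · have hp : ∀ x : Fin n, Pm n i x.succ = useq x.1 := by
        intro x; simp [Pm, hi, Fin.val_succ]
      have : ∀ x : Fin n, Pm n i x.succ * Qm n j x.succ
          = (bal (j.1-1) x.1 : ℤ) * useq x.1 := by
        intro x; rw [hp x, hq x]; ring
      rw [Finset.sum_congr rfl fun x _ => this x]
      rw [Fin.sum_univ_eq_sum_range (fun k => (bal (j.1-1) k : ℤ) * useq k) n]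
      rw [pad_sum (j.1-1) n (by omega) useq, G_spec]
      simp only [Matrix.of_apply]
      rw [show i.1 + j.1 = (j.1-1) + 1 by omega, ha1]
    · have hp : ∀ x : Fin n, Pm n i x.succ = (bal (i.1-1) x.1 : ℤ) := by
        intro x; simp [Pm, hi, Fin.val_succ]
      have : ∀ x : Fin n, Pm n i x.succ * Qm n j x.succ
          = (bal (i.1-1) x.1 : ℤ) * (bal (j.1-1) x.1 : ℤ) := by
        intro x; rw [hp x, hq x]
      rw [Finset.sum_congr rfl fun x _ => this x]
      rw [Fin.sum_univ_eq_sum_range (fun k => (bal (i.1-1) k : ℤ) * (bal (j.1-1) k : ℤ)) n]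
      rw [pad_sum (i.1-1) n (by omega) (fun k => (bal (j.1-1) k : ℤ)), F_spec]
      simp only [Matrix.of_apply]
      rw [show i.1 + j.1 = ((i.1-1) + (j.1-1)) + 2 by omega]
      have := ha1 ((i.1-1) + (j.1-1) + 1)
      rw [show (i.1-1) + (j.1-1) + 1 + 1 = (i.1-1) + (j.1-1) + 2 from rfl] at this
      rw [this]
      rfl

def Tri : Matrix (Fin (n+1)) (Fin (n+1)) ℤ := Matrix.of fun i j =>
  if i.1 = 0 then (if j.1 = 0 then 1 - (n:ℤ) else 0) else Mm n i j

lemma EM_eq : Em n * Mm n = Tri n := by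
  ext i j
  rw [Matrix.mul_apply]
  by_cases hi : i.1 = 0
  · rw [Fin.sum_univ_succ]
    have he0 : Em n i 0 = 1 := by simp [Em, hi]
    have hterm : ∀ x : Fin n, Em n i x.succ = - useq x.1 := by
      intro x; simp [Em, hi, Fin.val_succ]
    by_cases hj : j.1 = 0
    · have hm : ∀ x : Fin n, Mm n x.succ j = useq x.1 := by
        intro x; simp [Mm, hj, Fin.val_succ]
      have : ∀ x : Fin n, Em n i x.succ * Mm n x.succ j = -1 := by
        intro x; rw [hterm x, hm x]; have := useq_sq x.1; nlinarith [useq_sq x.1]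
      rw [Finset.sum_congr rfl fun x _ => this x]
      have hm0 : Mm n 0 j = 1 := by simp [Mm, hj]
      rw [he0, hm0, Finset.sum_const]
      simp [Tri, hi, hj, Finset.card_univ]
      ring
    · obtain ⟨j', rfl⟩ : ∃ j' : Fin n, j = j'.succ :=
        ⟨⟨j.1 - 1, by omega⟩, by ext; simp [Fin.val_succ]; omega⟩
      have hm : ∀ x : Fin n, Mm n x.succ j'.succ = if x = j' then 1 else 0 := by
        intro x; simp [Mm, Fin.val_succ, Fin.succ_inj]
      have : ∀ x : Fin n, Em n i x.succ * Mm n x.succ j'.succ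
          = if x = j' then - useq x.1 else 0 := by
        intro x; rw [hterm x, hm x]; split <;> ring
      rw [Finset.sum_congr rfl fun x _ => this x]
      rw [Finset.sum_ite_eq' Finset.univ j' (fun x => - useq x.1)]
      have hm0 : Mm n 0 j'.succ = useq j'.1 := by
        simp [Mm, Fin.val_succ]
      rw [he0, hm0]
      simp [Tri, hi, Fin.val_succ]
  · have : ∀ x : Fin (n+1), Em n i x * Mm n x j = if x = i then Mm n i j else 0 := by
      intro x
      by_cases hx : x = i
      · subst hx; simp [Em, hi]
      · have : Em n i x = 0 := by
          simp [Em, hi]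
          intro h; exact absurd h.symm (by simpa [eq_comm] using hx)
        rw [this]; simp [hx]
    rw [Finset.sum_congr rfl fun x _ => this x]
    rw [Finset.sum_ite_eq' Finset.univ i (fun _ => Mm n i j)]
    simp [Tri, hi]

end Main

section Dets
open Matrix OrderDual
variable (n : ℕ)

lemma det_Qm : (Qm n).det = 1 := by
  rw [Matrix.det_of_lowerTriangular (Qm n) ?_]
  · rw [Fin.prod_univ_succ]
    have h0 : Qm n 0 0 = 1 := by simp [Qm]
    have hs : ∀ x : Fin n, Qm n x.succ x.succ = (bal x.1 x.1 : ℤ) := by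
      intro x; simp [Qm, Fin.val_succ]
    rw [h0]
    simp [hs, bal_self]
  · intro i j hij
    have hlt : i < j := hij
    have : i.1 < j.1 := hlt
    by_cases hj : j.1 = 0
    · omega
    · simp [Qm, hj, show ¬ (i.1 = 0) → (i.1:ℕ) ≠ 0 from fun h => h]
      intro hi
      rw [bal_gt (i.1-1) (j.1-1) (by omega)]

lemma det_Em : (Em n).det = 1 := by
  rw [Matrix.det_of_upperTriangular ?_]
  · rw [Fin.prod_univ_succ]
    have h0 : Em n 0 0 = 1 := by simp [Em]
    have hs : ∀ x : Fin n, Em n x.succ x.succ = 1 := by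
      intro x; simp [Em, Fin.val_succ]
    rw [h0]; simp [hs]
  · intro i j hij
    have hlt : j.1 < i.1 := hij
    have hne : i ≠ j := by intro h; subst h; omega
    simp [Em, show ¬(i.1 = 0) from by omega, hne]

lemma det_Tri : (Tri n).det = 1 - (n:ℤ) := by
  rw [Matrix.det_of_lowerTriangular (Tri n) ?_]
  · rw [Fin.prod_univ_succ]
    have h0 : Tri n 0 0 = 1 - (n:ℤ) := by simp [Tri]
    have hs : ∀ x : Fin n, Tri n x.succ x.succ = 1 := by
      intro x; simp [Tri, Mm, Fin.val_succ]
    rw [h0]; simp [hs]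
  · intro i j hij
    have hlt : i.1 < j.1 := hij
    have hne : i ≠ j := by intro h; subst h; omega
    by_cases hi : i.1 = 0
    · simp [Tri, hi, show ¬(j.1 = 0) from by omega]
    · simp [Tri, hi, Mm, show ¬(j.1 = 0) from by omega, hne]

lemma det_Mm : (Mm n).det = 1 - (n:ℤ) := by
  have h := congrArg Matrix.det (EM_eq n)
  rw [Matrix.det_mul, det_Em, one_mul, det_Tri] at h
  exact h

end Dets

/-- The Hankel transform of the sequence `1, -1, C_0, 0, C_1, 0, C_2, 0, …` (the
expansion of `1 - x + x²·c(x²)`) is `1, 0, -1, -2, -3, …`, i.e., it equals `1` at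
`n = 0` and `1 - n` for `n ≥ 1`. -/
theorem hankel_transform_one_sub_x_add_xsq_catalanSq (a : ℕ → ℤ)
    (h0 : a 0 = 1) (h1 : a 1 = -1)
    (heven : ∀ m : ℕ, 1 ≤ m → a (2 * m) = (catalan (m - 1) : ℤ))
    (hodd : ∀ m : ℕ, 1 ≤ m → a (2 * m + 1) = 0) (n : ℕ) :
    Matrix.det (Matrix.of fun i j : Fin (n + 1) => a (i.1 + j.1)) =
      if n = 0 then 1 else 1 - (n : ℤ) := by
  have ha1 : ∀ s, a (s+1) = gseq s := by
    intro s
    match s with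
    | 0 => simpa [gseq] using h1
    | s+1 =>
      show a (s+2) = (bal s 0 : ℤ)
      rcases Nat.even_or_odd s with ⟨m, hm⟩ | ⟨m, hm⟩
      · subst hm
        rw [show m + m + 2 = 2*(m+1) by omega, heven (m+1) (by omega)]
        rw [show m + 1 - 1 = m from rfl]
        rw [show m + m = 2*m by omega, bal_two_mul]
      · subst hm
        rw [show 2*m+1+2 = 2*(m+1)+1 by omega, hodd (m+1) (by omega)]
        rw [bal_odd (2*m+1) 0 (by omega)]
        simp
  have hH : (Matrix.of fun i j : Fin (n+1) => a (i.1 + j.1))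
      = Qm n * Mm n * (Qm n).transpose := by
    rw [QM_eq, PQt_eq n a ha1 h0]
  rw [hH, Matrix.det_mul, Matrix.det_mul, Matrix.det_transpose, det_Qm, det_Mm]
  split_ifs with h
  · subst h; norm_num
  · ring
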